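/- Let n ∈ ℕ, n ≥ 1, α > 0, and let u ∈ Cⁿ(ℝ;ℝ) satisfy |u^{(ℓ)}(x)| ≤ c_ℓ (1+|x|)^{-α-ℓ} for all x ∈ ℝ and ℓ = 0,…,n. Then the Fourier transform û belongs to C^{n-1}(ℝ \ {0}), and there exists a constant C such that for every κ ∈ (0,1], sup_{|k| ≥ κ} |û^{(n-1)}(k)| ≤ C κ^{-2n+1}. -/

import Mathlib

open MeasureTheory

/-- The Fourier transform `û(k) = (2π)^{-1/2} ∫ e^{-ixk} u(x) dx` of a real function. -/
noncomputable def fourierHat (u : ℝ → ℝ) : ℝ → ℂ :=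
  fun k => (1 / Real.sqrt (2 * Real.pi) : ℝ) *
    ∫ x : ℝ, Complex.exp (-(Complex.I * (x : ℂ) * (k : ℂ))) * (u x : ℂ)

open Real Complex FourierTransform Filter

lemma FT_conv (f : ℝ → ℂ) (k : ℝ) :
    𝓕 f (k / (2 * Real.pi)) = ∫ x : ℝ, Complex.exp (-(Complex.I * (x : ℂ) * (k : ℂ))) * f x := by
  rw [Real.fourier_real_eq_integral_exp_smul]
  congr 1
  ext x
  rw [smul_eq_mul]
  congr 2
  have h : -2 * Real.pi * x * (k / (2 * Real.pi)) = -(x * k) := by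
    field_simp
  rw [h]
  push_cast
  ring

lemma fourierHat_eq (v : ℝ → ℝ) (k : ℝ) :
    fourierHat v k = ((1 / Real.sqrt (2 * Real.pi) : ℝ) : ℂ) *
      𝓕 (fun x => ((v x : ℝ) : ℂ)) (k / (2 * Real.pi)) := by
  rw [fourierHat, FT_conv]

lemma iteratedDeriv_coe (u : ℝ → ℝ) {n : WithTop ℕ∞} (hu : ContDiff ℝ n u) {m : ℕ}
    (hm : (m : WithTop ℕ∞) ≤ n) (x : ℝ) :
    iteratedDeriv m (fun y => ((u y : ℝ) : ℂ)) x = ((iteratedDeriv m u x : ℝ) : ℂ) := by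
  have h := Complex.ofRealCLM.iteratedFDeriv_comp_left (hu.contDiffAt (x := x)) hm
  rw [iteratedDeriv_eq_iteratedFDeriv, iteratedDeriv_eq_iteratedFDeriv]
  have heq : (fun y => ((u y : ℝ) : ℂ)) = Complex.ofRealCLM ∘ u := rfl
  rw [heq, h]
  simp

lemma aux_int (φ : ℝ → ℂ) (cφ β : ℝ) (hφ : Continuous φ)
    (hb : ∀ x : ℝ, ‖φ x‖ ≤ cφ * (1 + |x|) ^ (-β)) (j : ℕ) (hj : (1 : ℝ) + j < β) :
    Integrable (fun x : ℝ => ‖x‖ ^ j * ‖φ x‖) := by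
  have h1 : (1 : ℝ) < β - j := by linarith
  have hint : Integrable (fun x : ℝ => cφ * (1 + ‖x‖) ^ (-(β - (j : ℝ)))) :=
    (integrable_one_add_norm (by simpa using h1)).const_mul cφ
  refine hint.mono' ((continuous_norm.pow j).mul hφ.norm).aestronglyMeasurable ?_
  refine Filter.Eventually.of_forall fun x => ?_
  have h0 : (0:ℝ) < 1 + ‖x‖ := by positivity
  rw [Real.norm_of_nonneg (by positivity)]
  calc ‖x‖ ^ j * ‖φ x‖ ≤ (1 + ‖x‖) ^ j * (cφ * (1 + |x|) ^ (-β)) := by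
        apply mul_le_mul (by gcongr; linarith [norm_nonneg x]) (by simpa using hb x)
          (norm_nonneg _) (by positivity)
    _ = cφ * (1 + ‖x‖) ^ (-(β - (j : ℝ))) := by
        simp only [Real.norm_eq_abs]
        rw [show -(β - (j : ℝ)) = (j : ℝ) + -β by ring,
          Real.rpow_add (by positivity : (0:ℝ) < 1 + |x|), Real.rpow_natCast]
        ring

lemma aux_int0 (φ : ℝ → ℂ) (cφ β : ℝ) (hφ : Continuous φ)
    (hb : ∀ x : ℝ, ‖φ x‖ ≤ cφ * (1 + |x|) ^ (-β)) (hβ : (1 : ℝ) < β) :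
    Integrable φ := by
  have := aux_int φ cφ β hφ hb 0 (by simpa using hβ)
  simp only [pow_zero, one_mul] at this
  exact (integrable_norm_iff hφ.aestronglyMeasurable).1 this

lemma hderiv (m : ℤ) (j : ℕ) : ∀ k : ℝ, k ≠ 0 →
    iteratedDeriv j (fun k : ℝ => (Complex.I * (k : ℂ)) ^ m) k =
      (∏ l ∈ Finset.range j, ((m : ℂ) - l)) * Complex.I ^ j *
        (Complex.I * (k : ℂ)) ^ (m - j) := by
  induction j with
  | zero => intro k hk; simp
  | succ j IH =>
    intro k hk
    have hne : ∀ y : ℝ, y ≠ 0 → Complex.I * (y : ℂ) ≠ 0 := fun y hy =>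
      mul_ne_zero Complex.I_ne_zero (Complex.ofReal_ne_zero.2 hy)
    rw [iteratedDeriv_succ]
    have hev : iteratedDeriv j (fun k : ℝ => (Complex.I * (k : ℂ)) ^ m) =ᶠ[nhds k]
        fun y : ℝ => (∏ l ∈ Finset.range j, ((m : ℂ) - l)) * Complex.I ^ j *
          (Complex.I * (y : ℂ)) ^ (m - j) := by
      filter_upwards [isOpen_compl_singleton.mem_nhds (by simpa using hk : k ∈ ({0}ᶜ : Set ℝ))]
        with y hy
      exact IH y hy
    rw [hev.deriv_eq]
    have hinner : HasDerivAt (fun y : ℝ => Complex.I * (y : ℂ)) Complex.I k := by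
      simpa using (Complex.ofRealCLM.hasDerivAt (x := k)).const_mul Complex.I
    have hz := hasDerivAt_zpow (m - (j:ℤ)) (Complex.I * (k:ℂ)) (Or.inl (hne k hk))
    have hz2 : HasDerivAt (fun y : ℝ => (Complex.I * (y:ℂ)) ^ (m - (j:ℤ)))
        (((m : ℂ) - (j:ℕ)) * (Complex.I * (k:ℂ)) ^ (m - (j:ℤ) - 1) * Complex.I) k := by
      have := hz.comp k hinner
      simp only [Function.comp_def] at this
      convert this using 2
      case e'_4 => rfl
      push_cast
      ring
    have hcomp := hz2.const_mul
      ((∏ l ∈ Finset.range j, ((m : ℂ) - l)) * Complex.I ^ j)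
    rw [hcomp.deriv, Finset.prod_range_succ]
    have hexp : m - (j : ℤ) - 1 = m - (j + 1 : ℕ) := by push_cast; ring
    rw [← hexp]
    push_cast
    ring

/-- If `u ∈ Cⁿ(ℝ;ℝ)`, `n ≥ 1`, satisfies `|u^{(ℓ)}(x)| ≤ c_ℓ (1+|x|)^{-α-ℓ}` for `ℓ = 0,…,n`
and some `α > 0`, then `û ∈ C^{n-1}(ℝ \ {0})` and there is a constant `C` such that
`sup_{|k| ≥ κ} |û^{(n-1)}(k)| ≤ C κ^{-2n+1}` for every `κ ∈ (0,1]`. -/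
theorem stmt_1 (n : ℕ) (hn : 1 ≤ n) (α : ℝ) (hα : 0 < α) (u : ℝ → ℝ) (c : ℕ → ℝ)
    (hu : ContDiff ℝ n u)
    (hdecay : ∀ ℓ ≤ n, ∀ x : ℝ, |iteratedDeriv ℓ u x| ≤ c ℓ * (1 + |x|) ^ (-α - (ℓ : ℝ))) :
    ContDiffOn ℝ (n - 1 : ℕ) (fourierHat u) ({0}ᶜ : Set ℝ) ∧
    ∃ C : ℝ, ∀ κ ∈ Set.Ioc (0:ℝ) 1, ∀ k : ℝ, κ ≤ |k| →
      ‖iteratedDerivWithin (n - 1) (fourierHat u) ({0}ᶜ : Set ℝ) k‖ ≤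
        C * κ ^ (-(2 * (n : ℤ)) + 1) := by
  have hUD : UniqueDiffOn ℝ ({0}ᶜ : Set ℝ) := isOpen_compl_singleton.uniqueDiffOn
  set uc : ℝ → ℂ := fun x => ((u x : ℝ) : ℂ) with huc
  have hucd : ContDiff ℝ (n : WithTop ℕ∞) uc := Complex.ofRealCLM.contDiff.comp hu
  set gc : ℝ → ℂ := fun x => ((iteratedDeriv n u x : ℝ) : ℂ) with hgc
  have hgcont : Continuous gc :=
    Complex.continuous_ofReal.comp (hu.continuous_iteratedDeriv n le_rfl)
  have hgbd : ∀ x : ℝ, ‖gc x‖ ≤ c n * (1 + |x|) ^ (-(α + n)) := by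
    intro x
    have := hdecay n le_rfl x
    rw [show -α - (n : ℝ) = -(α + n) by ring] at this
    simpa [hgc, Complex.norm_real] using this
  -- integrability of moments of gc
  have hint_pow : ∀ j : ℕ, j ≤ n - 1 → Integrable (fun x : ℝ => ‖x‖ ^ j * ‖gc x‖) := by
    intro j hj
    refine aux_int gc (c n) (α + n) hgcont hgbd j ?_
    have : (j : ℝ) ≤ (n : ℝ) - 1 := by
      have : (j : ℕ) ≤ n - 1 := hj
      have := Nat.cast_le (α := ℝ).2 this
      rw [Nat.cast_sub hn] at this
      simpa using this
    linarith
  -- smoothness of the Fourier transform of gc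
  have hFg : ContDiff ℝ ((n - 1 : ℕ) : ℕ∞) (𝓕 gc) := by
    apply Real.contDiff_fourier
    intro m hm
    exact hint_pow m (by exact_mod_cast hm)
  -- the rescaling linear map
  set L : ℝ →L[ℝ] ℝ := (2 * Real.pi)⁻¹ • ContinuousLinearMap.id ℝ ℝ with hLdef
  have hL : ∀ k : ℝ, L k = k / (2 * Real.pi) := by
    intro k
    simp [hLdef, div_eq_inv_mul, smul_eq_mul]
  set r : ℝ := 1 / Real.sqrt (2 * Real.pi) with hrdef
  set G : ℝ → ℂ := fourierHat (fun x => iteratedDeriv n u x) with hGdef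
  have hGeq : G = fun k => r • (𝓕 gc ∘ L) k := by
    funext k
    rw [hGdef, fourierHat_eq]
    simp only [Function.comp_apply, hL k]
    rw [Complex.real_smul]
  have hFgL : ContDiff ℝ ((n - 1 : ℕ) : WithTop ℕ∞) (𝓕 gc ∘ L) := by
    exact (hFg.of_le le_rfl).comp L.contDiff
  have hGcd : ContDiff ℝ ((n - 1 : ℕ) : WithTop ℕ∞) G := by
    rw [hGeq]
    exact hFgL.const_smul r
  -- uniform bounds on the derivatives of G
  have hGbd : ∀ j : ℕ, ∃ M : ℝ, j ≤ n - 1 → ∀ ξ : ℝ, ‖iteratedFDeriv ℝ j G ξ‖ ≤ M := by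
    intro j
    by_cases hj : j ≤ n - 1
    swap
    · exact ⟨0, fun h => absurd h hj⟩
    have hgc0 : ContDiff ℝ ((0 : ℕ∞) : WithTop ℕ∞) gc := contDiff_zero.2 hgcont
    have hD : ∀ w : ℝ, ‖iteratedFDeriv ℝ j (𝓕 gc) w‖ ≤
        (2 * Real.pi) ^ j * ∑ p ∈ Finset.range (j + 1) ×ˢ Finset.range (0 + 1),
          ∫ v : ℝ, ‖v‖ ^ p.1 * ‖iteratedFDeriv ℝ p.2 gc v‖ := by
      intro w
      have := Real.pow_mul_norm_iteratedFDeriv_fourier_le (K := (j : ℕ∞)) (N := 0)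
        hgc0 (fun a b ha hb => by
          have hb0 : b = 0 := by exact_mod_cast nonpos_iff_eq_zero.1 hb
          subst hb0
          have ha' : a ≤ j := by exact_mod_cast ha
          simp only [norm_iteratedFDeriv_zero]
          exact hint_pow a (ha'.trans hj)) (le_refl (j : ℕ∞)) (le_refl (0 : ℕ∞)) w
      simpa using this
    refine ⟨‖r‖ * (((2 * Real.pi) ^ j * ∑ p ∈ Finset.range (j + 1) ×ˢ Finset.range (0 + 1),
          ∫ v : ℝ, ‖v‖ ^ p.1 * ‖iteratedFDeriv ℝ p.2 gc v‖) * ‖L‖ ^ j), fun _ ξ => ?_⟩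
    have hjle : (j : WithTop ℕ∞) ≤ ((n - 1 : ℕ) : WithTop ℕ∞) := by exact_mod_cast hj
    rw [hGeq]
    rw [iteratedFDeriv_const_smul_apply' (hFgL.of_le hjle).contDiffAt]
    rw [norm_smul r (iteratedFDeriv ℝ j (𝓕 gc ∘ ⇑L) ξ)]
    gcongr
    rw [L.iteratedFDeriv_comp_right hFg ξ hjle]
    refine le_trans (ContinuousMultilinearMap.norm_compContinuousLinearMap_le _ _) ?_
    have : ∏ _i : Fin j, ‖L‖ = ‖L‖ ^ j := by simp
    rw [this]
    gcongr
    exact hD (L ξ)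
  -- case split on integrability of u
  by_cases hInt : Integrable uc
  · -- the key identity on {0}ᶜ
    have hintder : ∀ m : ℕ, (m : ℕ∞) ≤ (n : ℕ∞) → Integrable (iteratedDeriv m uc) := by
      intro m hm
      have hm' : m ≤ n := by exact_mod_cast hm
      rcases Nat.eq_zero_or_pos m with hm0 | hm0
      · subst hm0; simpa [iteratedDeriv_zero] using hInt
      · have hco : iteratedDeriv m uc = fun x => ((iteratedDeriv m u x : ℝ) : ℂ) := by
          funext x; exact iteratedDeriv_coe u hu (by exact_mod_cast hm') x
        rw [hco]
        have h1m : (1 : ℝ) ≤ (m : ℝ) := by exact_mod_cast hm0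
        refine aux_int0 _ (c m) (α + m) (Complex.continuous_ofReal.comp
          (hu.continuous_iteratedDeriv m (by exact_mod_cast hm'))) (fun x => ?_)
          (by linarith)
        have := hdecay m hm' x
        rw [show -α - (m : ℝ) = -(α + m) by ring] at this
        simpa [Complex.norm_real] using this
    have hkey : Set.EqOn (fourierHat u)
        (fun k => (Complex.I * (k : ℂ)) ^ (-(n : ℤ)) * G k) ({0}ᶜ : Set ℝ) := by
      intro k hk
      have hk0 : k ≠ 0 := hk
      have hFT := congrFun (Real.fourier_iteratedDeriv (f := uc) (N := (n : ℕ∞))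
        hucd hintder le_rfl) (k / (2 * Real.pi))
      have hgceq : iteratedDeriv n uc = gc := by
        funext x; exact iteratedDeriv_coe u hu le_rfl x
      rw [hgceq] at hFT
      have hIk : (2 * (Real.pi : ℂ) * Complex.I * ((k / (2 * Real.pi) : ℝ) : ℂ)) =
          Complex.I * (k : ℂ) := by
        have hπ : (Real.pi : ℂ) ≠ 0 := Complex.ofReal_ne_zero.2 Real.pi_ne_zero
        push_cast
        field_simp
      rw [hIk] at hFT
      have hne : (Complex.I * (k : ℂ)) ^ n ≠ 0 :=
        pow_ne_zero n (mul_ne_zero Complex.I_ne_zero (Complex.ofReal_ne_zero.2 hk0))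
      have hu_eq := fourierHat_eq u k
      have hg_eq := fourierHat_eq (fun x => iteratedDeriv n u x) k
      simp only [← huc] at hu_eq
      rw [← hgc] at hg_eq
      rw [← hGdef] at hg_eq
      show fourierHat u k = (Complex.I * (k : ℂ)) ^ (-(n : ℤ)) * G k
      rw [hu_eq, hg_eq, hFT]
      rw [smul_eq_mul, zpow_neg, zpow_natCast]
      field_simp
    have hhcd : ContDiffOn ℝ ((n - 1 : ℕ) : WithTop ℕ∞)
        (fun k : ℝ => (Complex.I * (k : ℂ)) ^ (-(n : ℤ))) ({0}ᶜ : Set ℝ) := by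
      have hpow : ContDiff ℝ ((n - 1 : ℕ) : WithTop ℕ∞)
          (fun k : ℝ => (Complex.I * (k : ℂ)) ^ n) :=
        (contDiff_const.mul Complex.ofRealCLM.contDiff).pow n
      refine ContDiffOn.congr (ContDiffOn.inv hpow.contDiffOn ?_) ?_
      · intro k hk
        exact pow_ne_zero n (mul_ne_zero Complex.I_ne_zero
          (Complex.ofReal_ne_zero.2 hk))
      · intro k hk
        rw [zpow_neg, zpow_natCast]; rfl
    have hmul : ContDiffOn ℝ ((n - 1 : ℕ) : WithTop ℕ∞)
        (fun k : ℝ => (Complex.I * (k : ℂ)) ^ (-(n : ℤ)) * G k) ({0}ᶜ : Set ℝ) :=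
      hhcd.mul hGcd.contDiffOn
    constructor
    · exact hmul.congr fun k hk => hkey hk
    · -- the quantitative bound
      choose b hb using hGbd
      set B : ℝ := ∑ j ∈ Finset.range n, |b j| with hBdef
      have hB : ∀ j : ℕ, j ≤ n - 1 → ∀ ξ : ℝ, ‖iteratedFDeriv ℝ j G ξ‖ ≤ B := by
        intro j hj ξ
        refine (hb j hj ξ).trans ((le_abs_self _).trans ?_)
        exact Finset.single_le_sum (f := fun i => |b i|) (fun i _ => abs_nonneg _)
          (Finset.mem_range.2 (by omega))
      have hBnn : 0 ≤ B := Finset.sum_nonneg fun i _ => abs_nonneg _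
      set P : ℕ → ℝ := fun i => ∏ l ∈ Finset.range i, ‖((-(n : ℤ) : ℂ) - l)‖ with hPdef
      have hPnn : ∀ i, 0 ≤ P i := fun i => Finset.prod_nonneg fun l _ => norm_nonneg _
      refine ⟨∑ i ∈ Finset.range n, ((n - 1).choose i : ℝ) * P i * B, ?_⟩
      rintro κ ⟨hκ0, hκ1⟩ k hκk
      have hk0 : k ≠ 0 := by
        intro hcon
        rw [hcon] at hκk
        simp at hκk
        linarith
      have hmem : k ∈ ({0}ᶜ : Set ℝ) := hk0
      have hexp : κ ^ (-(2 * (n : ℤ)) + 1) = (κ ^ (2 * n - 1 : ℕ))⁻¹ := by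
        rw [show (-(2 * (n : ℤ)) + 1) = -((2 * n - 1 : ℕ) : ℤ) by
          push_cast [Nat.cast_sub (by omega : 1 ≤ 2 * n)]; ring]
        rw [zpow_neg, zpow_natCast]
      have hκpow_pos : (0:ℝ) < κ ^ (2 * n - 1 : ℕ) := pow_pos hκ0 _
      have hκE_nn : (0:ℝ) ≤ κ ^ (-(2 * (n : ℤ)) + 1) := by
        rw [hexp]; positivity
      -- bound for each zpow factor
      have hzbd : ∀ i : ℕ, i ≤ n - 1 →
          |k| ^ (-(n : ℤ) - i) ≤ κ ^ (-(2 * (n : ℤ)) + 1) := by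
        intro i hi
        rw [hexp, show (-(n : ℤ) - i) = -((n + i : ℕ) : ℤ) by push_cast; ring,
          zpow_neg, zpow_natCast]
        have h1 : κ ^ (2 * n - 1 : ℕ) ≤ |k| ^ (n + i : ℕ) := by
          calc κ ^ (2 * n - 1 : ℕ) ≤ κ ^ (n + i : ℕ) :=
                pow_le_pow_of_le_one hκ0.le hκ1 (by omega)
            _ ≤ |k| ^ (n + i : ℕ) := by
                gcongr
        exact inv_anti₀ hκpow_pos h1
      -- main estimate
      rw [← norm_iteratedFDerivWithin_eq_norm_iteratedDerivWithin,
        iteratedFDerivWithin_congr hkey hmem]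
      refine le_trans (norm_iteratedFDerivWithin_mul_le hhcd hGcd.contDiffOn hUD hmem le_rfl) ?_
      rw [show n - 1 + 1 = n by omega]
      rw [Finset.sum_mul]
      refine Finset.sum_le_sum fun i hi => ?_
      have hi' : i ≤ n - 1 := by
        have := Finset.mem_range.1 hi; omega
      have hileft : ‖iteratedFDerivWithin ℝ i
          (fun k : ℝ => (Complex.I * (k : ℂ)) ^ (-(n : ℤ))) ({0}ᶜ : Set ℝ) k‖ =
          P i * |k| ^ (-(n : ℤ) - i) := by
        rw [iteratedFDerivWithin_of_isOpen _ isOpen_compl_singleton hmem,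
          norm_iteratedFDeriv_eq_norm_iteratedDeriv, hderiv (-(n : ℤ)) i k hk0]
        rw [norm_mul, norm_mul, norm_prod, norm_pow, Complex.norm_I, one_pow, mul_one,
          norm_zpow, norm_mul, Complex.norm_I, Complex.norm_real, one_mul, Real.norm_eq_abs]
        push_cast
        rfl
      have hiright : ‖iteratedFDerivWithin ℝ (n - 1 - i) G ({0}ᶜ : Set ℝ) k‖ ≤ B := by
        rw [iteratedFDerivWithin_of_isOpen _ isOpen_compl_singleton hmem]
        exact hB (n - 1 - i) (by omega) k
      rw [hileft]
      calc ((n - 1).choose i : ℝ) * (P i * |k| ^ (-(n : ℤ) - i)) *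
            ‖iteratedFDerivWithin ℝ (n - 1 - i) G ({0}ᶜ : Set ℝ) k‖
          ≤ ((n - 1).choose i : ℝ) * (P i * κ ^ (-(2 * (n : ℤ)) + 1)) * B := by
            have hzk : (0:ℝ) ≤ |k| ^ (-(n : ℤ) - i) := by positivity
            apply mul_le_mul
            · apply mul_le_mul_of_nonneg_left
              · exact mul_le_mul_of_nonneg_left (hzbd i hi') (hPnn i)
              · positivity
            · exact hiright
            · exact norm_nonneg _
            · positivity
        _ = ((n - 1).choose i : ℝ) * P i * B * κ ^ (-(2 * (n : ℤ)) + 1) := by ring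
  · -- u is not integrable: the Fourier transform vanishes identically
    have hzero : fourierHat u = fun _ => (0 : ℂ) := by
      funext k
      rw [fourierHat]
      have hni : ¬ Integrable (fun x : ℝ => Complex.exp (-(Complex.I * (x : ℂ) * (k : ℂ))) *
          (u x : ℂ)) := by
        intro hc
        apply hInt
        have hnorm : (fun x : ℝ => ‖Complex.exp (-(Complex.I * (x : ℂ) * (k : ℂ))) *
            (u x : ℂ)‖) = fun x : ℝ => ‖uc x‖ := by
          funext x
          rw [norm_mul, Complex.norm_exp]
          simp [huc, Complex.norm_real]
        have := hc.norm
        rw [hnorm] at this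
        exact (integrable_norm_iff (hucd.continuous.aestronglyMeasurable)).1 this
      rw [integral_undef hni, mul_zero]
    constructor
    · rw [hzero]; exact contDiffOn_const
    · refine ⟨0, fun κ hκ k hκk => ?_⟩
      have hk0 : k ≠ 0 := by
        intro hcon; rw [hcon] at hκk; simp at hκk; linarith [hκ.1]
      have hmem : k ∈ ({0}ᶜ : Set ℝ) := hk0
      rw [hzero, zero_mul]
      rw [← norm_iteratedFDerivWithin_eq_norm_iteratedDerivWithin]
      rcases Nat.eq_zero_or_pos (n - 1) with h0 | hpos
      · rw [h0]
        rw [norm_iteratedFDerivWithin_zero]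
        simp
      · rw [iteratedFDerivWithin_const_of_ne (n := n - 1) (by omega)]
        simp
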